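/- (Converter device Conv(q).) Let H > 0, q > 0 and 0 ≤ p ≤ H·q. Consider three goods G_1, G_2, G_3 with prices p, q, and H·q − p respectively, and two agents: A_1 with endowment H units of G_2 and Leontief utility min(y_1, y_3); A_2 with endowment one unit of G_3 and utility y_2. Then the maximum budget-constrained utility of A_1 equals 1, attained by consuming exactly one unit each of G_1 and G_3, and the maximum budget-constrained utility of A_2 equals H − p/q, attained by consuming exactly H − p/q units of G_2. With these optimal bundles, good G_3 is exactly cleared within the pair, the pair's net consumption is one unit of G_1 (which neither agent owns), their net leftover endowment is exactly p/q units of G_2, and the value p of the net consumption equals the value q·(p/q) of the net leftover endowment. -/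

import Mathlib

open Finset

/-- The Leontief utility function with coefficient vector `A`:
`U(y) = min over {j : A j > 0} of y j / A j` (as the infimum of this finite set). -/
noncomputable def leontief {G : Type*} (A : G → ℝ) (y : G → ℝ) : ℝ :=
  sInf {t : ℝ | ∃ j, 0 < A j ∧ t = y j / A j}

/-- `x` is an optimal bundle at prices `p` for an agent with budget `budget`
and utility function `U`. -/
def IsOptimalBundle {G : Type*} [Fintype G] (p : G → ℝ) (budget : ℝ)
    (U : (G → ℝ) → ℝ) (x : G → ℝ) : Prop :=
  (∀ j, 0 ≤ x j) ∧ (∑ j, p j * x j ≤ budget) ∧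
    ∀ y : G → ℝ, (∀ j, 0 ≤ y j) → (∑ j, p j * y j ≤ budget) → U y ≤ U x

/-- Equilibrium of an exchange market given by endowments `W` and utilities `U`:
prices are nonnegative, every agent gets an optimal affordable bundle, no good
is over-demanded, and positively priced goods clear exactly. -/
def IsEquilibrium {ι G : Type*} [Fintype ι] [Fintype G]
    (W : ι → G → ℝ) (U : ι → (G → ℝ) → ℝ) (p : G → ℝ) (x : ι → G → ℝ) : Prop :=
  (∀ j, 0 ≤ p j) ∧
  (∀ i, IsOptimalBundle p (∑ j, p j * W i j) (U i) (x i)) ∧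
  (∀ j, ∑ i, x i j ≤ ∑ i, W i j) ∧
  (∀ j, 0 < p j → ∑ i, x i j = ∑ i, W i j)

/-- Good `r` is exclusive to the set `S` of agents: every agent outside `S` has
no endowment of `r` and a utility function not depending on the `r`-coordinate. -/
def ExclusiveGood {ι G : Type*} (W : ι → G → ℝ) (U : ι → (G → ℝ) → ℝ)
    (r : G) (S : Set ι) : Prop :=
  ∀ i ∉ S, W i r = 0 ∧ ∀ y y' : G → ℝ, (∀ j, j ≠ r → y j = y' j) → U i y = U i y'

/-- **Converter device Conv(q).** With goods `G1, G2, G3` at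
prices `p`, `q`, `H·q − p`, agent `A1` (endowment `H` units of `G2`, Leontief
utility `min(y1, y3)`) optimally consumes one unit each of `G1` and `G3`
attaining utility `1`, and agent `A2` (endowment one unit of `G3`, utility `y2`)
optimally consumes `H − p/q` units of `G2`; `G3` is exactly cleared within the
pair, the net consumption is one unit of `G1` (owned by neither), the net
leftover endowment is `p/q` units of `G2`, and the values balance. -/
theorem converter_device (H q p : ℝ) (hH : 0 < H) (hq : 0 < q)
    (hp0 : 0 ≤ p) (hpH : p ≤ H * q) :
    let pr : Fin 3 → ℝ := ![p, q, H * q - p]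
    let W1 : Fin 3 → ℝ := ![0, H, 0]
    let W2 : Fin 3 → ℝ := ![0, 0, 1]
    let U1 : (Fin 3 → ℝ) → ℝ := fun y => min (y 0) (y 2)
    let U2 : (Fin 3 → ℝ) → ℝ := fun y => y 1
    let x1 : Fin 3 → ℝ := ![1, 0, 1]
    let x2 : Fin 3 → ℝ := ![0, H - p / q, 0]
    (IsOptimalBundle pr (∑ j, pr j * W1 j) U1 x1 ∧ U1 x1 = 1) ∧
    (IsOptimalBundle pr (∑ j, pr j * W2 j) U2 x2 ∧ U2 x2 = H - p / q) ∧
    (x1 2 + x2 2 = W1 2 + W2 2) ∧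
    (x1 0 + x2 0 = 1 ∧ W1 0 + W2 0 = 0) ∧
    ((W1 1 + W2 1) - (x1 1 + x2 1) = p / q) ∧
    (p * (x1 0 + x2 0) = q * ((W1 1 + W2 1) - (x1 1 + x2 1))) := by
  intro pr W1 W2 U1 U2 x1 x2
  have hHq : 0 < H * q := mul_pos hH hq
  have hbud1 : (∑ j, pr j * W1 j) = H * q := by
    simp [pr, W1, Fin.sum_univ_three]; ring
  have hbud2 : (∑ j, pr j * W2 j) = H * q - p := by
    simp [pr, W2, Fin.sum_univ_three]
  refine ⟨⟨?_, ?_⟩, ⟨?_, ?_⟩, ?_, ⟨?_, ?_⟩, ?_, ?_⟩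
  · refine ⟨?_, ?_, ?_⟩
    · intro j; fin_cases j <;> simp [x1]
    · rw [hbud1]; simp [pr, x1, Fin.sum_univ_three]
    · intro y hy hb
      rw [hbud1] at hb
      simp only [pr, Fin.sum_univ_three, Matrix.cons_val_zero, Matrix.cons_val_one,
        Matrix.head_cons, Matrix.cons_val_two, Matrix.tail_cons] at hb
      have hx : U1 x1 = 1 := by simp [U1, x1]
      rw [hx]
      set m := min (y 0) (y 2) with hm
      by_contra h
      push_neg at h
      have h0 : p * m ≤ p * y 0 := by
        apply mul_le_mul_of_nonneg_left (min_le_left _ _) hp0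
      have h2 : (H * q - p) * m ≤ (H * q - p) * y 2 := by
        apply mul_le_mul_of_nonneg_left (min_le_right _ _) (by linarith)
      have hq2 : 0 ≤ q * y 1 := mul_nonneg hq.le (hy 1)
      nlinarith
  · simp [U1, x1]
  · refine ⟨?_, ?_, ?_⟩
    · intro j; fin_cases j <;> simp [x2]
      exact div_le_of_le_mul₀ hq.le hH.le (by linarith)
    · rw [hbud2]; simp [pr, x2, Fin.sum_univ_three]
      rw [mul_sub, mul_div_cancel₀ _ hq.ne']
      ring_nf
      exact le_refl _
    · intro y hy hb
      rw [hbud2] at hb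
      simp only [pr, Fin.sum_univ_three, Matrix.cons_val_zero, Matrix.cons_val_one,
        Matrix.head_cons, Matrix.cons_val_two, Matrix.tail_cons] at hb
      have hx : U2 x2 = H - p / q := by simp [U2, x2]
      rw [hx]
      have h0 : 0 ≤ p * y 0 := mul_nonneg hp0 (hy 0)
      have h2 : 0 ≤ (H * q - p) * y 2 := mul_nonneg (by linarith) (hy 2)
      have h3 : q * y 1 ≤ H * q - p := by linarith
      have h4 : y 1 ≤ (H * q - p) / q := (le_div_iff₀' hq).mpr h3
      simpa [U2, sub_div, mul_div_cancel_right₀ _ hq.ne'] using h4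
  · simp [U2, x2]
  · simp [x1, x2, W1, W2]
  · simp [x1, x2]
  · simp [W1, W2]
  · simp [x1, x2, W1, W2]
  · show p * (1 + 0) = q * (H + 0 - (0 + (H - p / q))); field_simp; ring
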